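/- For the family Φ_ρ of Bernstein functions induced by the generalized Gamma measure: (i) if ρ ≤ 0, setting γ = ρ/(ρ−1) ∈ [0,1), one has lim_{α→∞} Φ'_ρ(α)/α^{γ−1} = (1−γ)^{1−γ}; and (ii) for every s > 0, lim_{α→∞} Φ_ρ(αs)/Φ_ρ(α) = 1 if ρ ∈ [0,1], while lim_{α→∞} Φ_ρ(αs)/Φ_ρ(α) = s^{ρ/(ρ−1)} if ρ < 0. -/

import Mathlib

open Filter Set Topology

/-- The family `Φ_ρ` of Bernstein functions induced by the generalized Gamma measure. -/
noncomputable def PhiRho (ρ s : ℝ) : ℝ :=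
  if ρ = 0 then Real.log (1 + s)
  else if ρ = 1 then 1 - Real.exp (-s)
  else (1 / ρ) * (1 - (1 + (1 - ρ) * s) ^ (-(ρ / (1 - ρ))))

/-- The first derivative `Φ'_ρ` of `Φ_ρ`. -/
noncomputable def PhiRho' (ρ s : ℝ) : ℝ :=
  if ρ = 0 then 1 / (1 + s)
  else if ρ = 1 then Real.exp (-s)
  else (1 + (1 - ρ) * s) ^ (-(1 / (1 - ρ)))

private lemma auxL0 (b c : ℝ) :
    Tendsto (fun α : ℝ => (c + b * α) / α) atTop (nhds b) := by
  have h : Tendsto (fun α : ℝ => c * α⁻¹ + b) atTop (nhds (c * 0 + b)) :=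
    (tendsto_inv_atTop_zero.const_mul c).add_const b
  rw [mul_zero, zero_add] at h
  refine h.congr' ?_
  filter_upwards [eventually_gt_atTop 0] with α hα
  field_simp

private lemma auxBase (b c : ℝ) (hb : 0 < b) :
    Tendsto (fun α : ℝ => c + b * α) atTop atTop :=
  tendsto_atTop_add_const_left _ c (tendsto_id.const_mul_atTop hb)

private lemma auxL1 (b c e : ℝ) (hb : 0 < b) :
    Tendsto (fun α : ℝ => (c + b * α) ^ e / α ^ e) atTop (nhds (b ^ e)) := by
  have h1 : Tendsto (fun α : ℝ => ((c + b * α) / α) ^ e) atTop (nhds (b ^ e)) :=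
    (Real.continuousAt_rpow_const b e (Or.inl hb.ne')).tendsto.comp (auxL0 b c)
  refine h1.congr' ?_
  filter_upwards [eventually_gt_atTop 0, (auxBase b c hb).eventually_ge_atTop 0] with α hα hge
  rw [Real.div_rpow hge hα.le]

private lemma auxL2 (b c e : ℝ) (hb : 0 < b) (he : 0 < e) :
    Tendsto (fun α : ℝ => (1 - (c + b * α) ^ e) / α ^ e) atTop (nhds (-(b ^ e))) := by
  have h2 : Tendsto (fun α : ℝ => (α ^ e)⁻¹) atTop (nhds 0) :=
    (tendsto_rpow_atTop he).inv_tendsto_atTop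
  have h := h2.sub (auxL1 b c e hb)
  rw [zero_sub] at h
  exact h.congr fun α => by rw [sub_div, one_div]

theorem stmt_6 (ρ : ℝ) (hρ : ρ ≤ 1) :
    (ρ ≤ 0 →
      Tendsto (fun α => PhiRho' ρ α / α ^ (ρ / (ρ - 1) - 1)) atTop
        (nhds ((1 - ρ / (ρ - 1)) ^ (1 - ρ / (ρ - 1))))) ∧
    ∀ s : ℝ, 0 < s →
      ((0 ≤ ρ → Tendsto (fun α => PhiRho ρ (α * s) / PhiRho ρ α) atTop (nhds 1)) ∧
       (ρ < 0 → Tendsto (fun α => PhiRho ρ (α * s) / PhiRho ρ α) atTop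
          (nhds (s ^ (ρ / (ρ - 1)))))) := by
  constructor
  · intro hρ0
    rcases eq_or_lt_of_le hρ0 with h0 | hneg
    · -- ρ = 0
      subst h0
      have h := auxL1 1 1 (-1 : ℝ) one_pos
      simp only [one_mul, Real.one_rpow] at h
      have hexp : (0 : ℝ) / (0 - 1) - 1 = -1 := by norm_num
      have htgt : ((1 : ℝ) - 0 / (0 - 1)) ^ ((1 : ℝ) - 0 / (0 - 1)) = 1 := by norm_num
      rw [htgt, hexp]
      refine h.congr' ?_
      filter_upwards [eventually_gt_atTop 0] with α hα
      rw [PhiRho', if_pos rfl, Real.rpow_neg (by positivity), Real.rpow_one, one_div]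
    · -- ρ < 0
      have hb : (0 : ℝ) < 1 - ρ := by linarith
      have hne1 : ρ - 1 ≠ 0 := by linarith
      have hne1' : (1 : ℝ) - ρ ≠ 0 := hb.ne'
      have hexp : ρ / (ρ - 1) - 1 = -(1 / (1 - ρ)) := by field_simp; ring
      have ht : 1 - ρ / (ρ - 1) = (1 - ρ)⁻¹ := by field_simp; ring
      have h := auxL1 (1 - ρ) 1 (-(1 / (1 - ρ))) hb
      have htgt : (1 - ρ) ^ (-(1 / (1 - ρ))) =
          (1 - ρ / (ρ - 1)) ^ (1 - ρ / (ρ - 1)) := by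
        rw [ht, one_div, Real.rpow_neg hb.le, Real.inv_rpow hb.le]
      rw [← htgt, hexp]
      refine h.congr fun α => ?_
      rw [PhiRho', if_neg hneg.ne, if_neg (by linarith : ρ ≠ 1)]
  · intro s hs
    constructor
    · -- 0 ≤ ρ
      intro h0le
      by_cases hρ0 : ρ = 0
      · subst hρ0
        have hP : ∀ x : ℝ, PhiRho 0 x = Real.log (1 + x) := fun x => by simp [PhiRho]
        simp only [hP]
        have hlogtop : Tendsto Real.log atTop atTop := Real.tendsto_log_atTop
        have hlim : ∀ t : ℝ, 0 < t →
            Tendsto (fun α : ℝ => Real.log (α⁻¹ + t) / Real.log α) atTop (nhds 0) := by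
          intro t ht
          have h' : Tendsto (fun α : ℝ => α⁻¹ + t) atTop (nhds (0 + t)) :=
            tendsto_inv_atTop_zero.add_const t
          rw [zero_add] at h'
          have h'' : Tendsto (fun α : ℝ => Real.log (α⁻¹ + t)) atTop (nhds (Real.log t)) :=
            (Real.continuousAt_log ht.ne').tendsto.comp h'
          exact h''.div_atTop hlogtop
        have h3 : Tendsto (fun α : ℝ =>
            (1 + Real.log (α⁻¹ + s) / Real.log α) / (1 + Real.log (α⁻¹ + 1) / Real.log α))
            atTop (nhds ((1 + 0) / (1 + 0))) :=
          (tendsto_const_nhds.add (hlim s hs)).div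
            (tendsto_const_nhds.add (hlim 1 one_pos)) (by norm_num)
        norm_num at h3
        refine h3.congr' ?_
        filter_upwards [eventually_gt_atTop 1] with α hα
        have hα0 : (0 : ℝ) < α := by linarith
        have hL : 0 < Real.log α := Real.log_pos hα
        have e1 : Real.log (1 + α * s) = Real.log α + Real.log (α⁻¹ + s) := by
          rw [← Real.log_mul hα0.ne' (by positivity)]
          congr 1
          field_simp
        have e2 : Real.log (1 + α) = Real.log α + Real.log (α⁻¹ + 1) := by
          rw [← Real.log_mul hα0.ne' (by positivity)]
          congr 1
          field_simp
        have q1 : 1 + Real.log (α⁻¹ + s) / Real.log α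
            = (Real.log α + Real.log (α⁻¹ + s)) / Real.log α := by
          rw [add_div, div_self hL.ne']
        have q2 : 1 + Real.log (α⁻¹ + 1) / Real.log α
            = (Real.log α + Real.log (α⁻¹ + 1)) / Real.log α := by
          rw [add_div, div_self hL.ne']
        rw [e1, e2, q1, q2, div_div_div_cancel_right₀ hL.ne']
      · by_cases hρ1 : ρ = 1
        · subst hρ1
          have hP : ∀ x : ℝ, PhiRho 1 x = 1 - Real.exp (-x) := fun x => by
            simp [PhiRho]
          simp only [hP]
          have hexp : ∀ t : ℝ, 0 < t →
              Tendsto (fun α : ℝ => Real.exp (-(α * t))) atTop (nhds 0) := by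
            intro t ht
            have h1 : Tendsto (fun α : ℝ => α * t) atTop atTop :=
              tendsto_id.atTop_mul_const ht
            have h2 := tendsto_neg_atTop_atBot.comp h1
            have h3 := Real.tendsto_exp_atBot.comp h2
            simpa [Function.comp_def] using h3
          have h1' : Tendsto (fun α : ℝ => Real.exp (-α)) atTop (nhds 0) := by
            simpa using hexp 1 one_pos
          have hc : Tendsto (fun _ : ℝ => (1 : ℝ)) atTop (nhds 1) := tendsto_const_nhds
          have h := (hc.sub (hexp s hs)).div (hc.sub h1') (by norm_num : (1:ℝ) - 0 ≠ 0)
          norm_num at h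
          exact h.congr fun α => rfl
        · have h0 : 0 < ρ := lt_of_le_of_ne h0le (Ne.symm hρ0)
          have h1 : ρ < 1 := lt_of_le_of_ne hρ hρ1
          have hb : (0 : ℝ) < 1 - ρ := by linarith
          have he : 0 < ρ / (1 - ρ) := div_pos h0 hb
          have hlim : ∀ b : ℝ, 0 < b →
              Tendsto (fun α : ℝ => (1 / ρ) * (1 - (1 + b * α) ^ (-(ρ / (1 - ρ)))))
                atTop (nhds (1 / ρ)) := by
            intro b hbpos
            have h' := (tendsto_rpow_neg_atTop he).comp (auxBase b 1 hbpos)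
            have hc : Tendsto (fun _ : ℝ => (1 : ℝ)) atTop (nhds 1) := tendsto_const_nhds
            have h'' := (hc.sub h').const_mul (1 / ρ)
            simpa [Function.comp_def] using h''
          have hnum := hlim ((1 - ρ) * s) (by positivity)
          have hden := hlim (1 - ρ) hb
          have h := hnum.div hden (by positivity)
          rw [div_self (by positivity : (1 : ℝ) / ρ ≠ 0)] at h
          refine h.congr fun α => ?_
          simp only [Pi.div_apply]
          rw [PhiRho, PhiRho, if_neg hρ0, if_neg hρ0, if_neg hρ1, if_neg hρ1,
            show (1 - ρ) * (α * s) = (1 - ρ) * s * α from by ring]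
    · -- ρ < 0
      intro hneg
      have hb : (0 : ℝ) < 1 - ρ := by linarith
      have hρ0 : ρ ≠ 0 := hneg.ne
      have hρ1 : ρ ≠ 1 := by linarith
      have hne1 : ρ - 1 ≠ 0 := by linarith
      set γ := ρ / (ρ - 1) with hγ
      have hγpos : 0 < γ := div_pos_of_neg_of_neg hneg (by linarith)
      have hexp : -(ρ / (1 - ρ)) = γ := by
        rw [hγ]; field_simp; ring
      have hA := auxL2 ((1 - ρ) * s) 1 γ (by positivity) hγpos
      have hB := auxL2 (1 - ρ) 1 γ hb hγpos
      have hBpos : (0 : ℝ) < (1 - ρ) ^ γ := Real.rpow_pos_of_pos hb γ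
      have h := hA.div hB (neg_ne_zero.mpr hBpos.ne')
      have hval : -(((1 - ρ) * s) ^ γ) / -((1 - ρ) ^ γ) = s ^ γ := by
        rw [neg_div_neg_eq, Real.mul_rpow hb.le hs.le, mul_div_cancel_left₀ _ hBpos.ne']
      rw [hval] at h
      refine h.congr' ?_
      filter_upwards [eventually_gt_atTop 0] with α hα
      have hαγ : (0 : ℝ) < α ^ γ := Real.rpow_pos_of_pos hα γ
      simp only [Pi.div_apply]
      rw [div_div_div_cancel_right₀ hαγ.ne', PhiRho, PhiRho, if_neg hρ0, if_neg hρ0,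
        if_neg hρ1, if_neg hρ1, hexp,
        show (1 - ρ) * (α * s) = (1 - ρ) * s * α from by ring,
        mul_div_mul_left _ _ (one_div_ne_zero hρ0)]
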